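/- Let ζ ∈ ℂ and ε > 0 with |Im ζ| < ε. Then both functions x ↦ e^{−(x−iε)²/2}/(ζ − (x − iε)) and x ↦ e^{−(x+iε)²/2}/(ζ − (x + iε)) are Lebesgue integrable on ℝ, and (1/(2πi)) · ∫_ℝ [ e^{−(x−iε)²/2}/(ζ − (x − iε)) − e^{−(x+iε)²/2}/(ζ − (x + iε)) ] dx = −e^{−ζ²/2}. -/

import Mathlib

open Complex MeasureTheory

open Filter Real Topology

lemma aux_abs_tendsto (c : ℂ) :
    Tendsto (fun R : ℝ => ‖c - R‖) atTop atTop := by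
  have h0 : Tendsto (fun R : ℝ => R - c.re) atTop atTop :=
    tendsto_atTop_add_const_right atTop (-c.re) tendsto_id
  refine tendsto_atTop_mono (fun R => ?_) h0
  calc R - c.re = ((R : ℂ) - c).re := by simp
  _ ≤ ‖(R:ℂ) - c‖ := Complex.re_le_norm _
  _ = ‖c - R‖ := by rw [← norm_neg]; ring_nf

lemma aux_ratio_zero (a : ℝ) (c : ℂ) :
    Tendsto (fun R : ℝ => Real.arcsin (a / ‖c - R‖)) atTop (𝓝 0) := by
  have h2 : Tendsto (fun R : ℝ => a / ‖c - R‖) atTop (𝓝 0) := by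
    have := ((aux_abs_tendsto c).inv_tendsto_atTop).const_mul a
    simp only [mul_zero] at this
    exact this.congr fun R => (div_eq_mul_inv _ _).symm
  have := (Real.continuous_arcsin.tendsto 0).comp h2
  simpa [Function.comp_def] using this

-- arg (c + R) → 0 as R → ∞
lemma aux_arg_zero (c : ℂ) : Tendsto (fun R : ℝ => Complex.arg (c + R)) atTop (𝓝 0) := by
  have h3 := aux_ratio_zero c.im (-c)
  apply h3.congr'
  filter_upwards [eventually_ge_atTop (-c.re)] with R hR
  have : ‖-c - R‖ = ‖c + R‖ := by
    rw [← norm_neg]; ring_nf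
  rw [this, Complex.arg_of_re_nonneg (by simpa using by linarith : (0:ℝ) ≤ (c + (R:ℂ)).re)]
  simp

-- arg (c - R) → -π as R → ∞ when c.im < 0
lemma aux_arg_neg_pi (c : ℂ) (hc : c.im < 0) :
    Tendsto (fun R : ℝ => Complex.arg (c - R)) atTop (𝓝 (-π)) := by
  have h3 := (aux_ratio_zero (-c.im) c).sub_const π
  rw [zero_sub] at h3
  apply h3.congr'
  filter_upwards [eventually_gt_atTop c.re] with R hR
  rw [Complex.arg_of_re_neg_of_im_neg (by simpa using by linarith) (by simpa using hc)]
  simp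

-- arg (c - R) → π as R → ∞ when 0 < c.im
lemma aux_arg_pi (c : ℂ) (hc : 0 < c.im) :
    Tendsto (fun R : ℝ => Complex.arg (c - R)) atTop (𝓝 π) := by
  have h3 := (aux_ratio_zero (-c.im) c).add_const π
  rw [zero_add] at h3
  apply h3.congr'
  filter_upwards [eventually_gt_atTop c.re] with R hR
  rw [Complex.arg_of_re_neg_of_im_nonneg (by simpa using by linarith) (by simpa using hc.le)]
  simp

lemma aux_logabs (c₁ c₂ : ℂ) (h₁ : c₁.im ≠ 0) (h₂ : c₂.im ≠ 0) (hre : c₁.re = c₂.re) :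
    Tendsto (fun R : ℝ => Real.log (‖c₁ - R‖) - Real.log (‖c₂ - R‖))
      atTop (𝓝 0) := by
  set s₁ : ℝ → ℝ := fun R => (R - c₁.re)^2 + c₁.im^2 with hs₁
  set s₂ : ℝ → ℝ := fun R => (R - c₂.re)^2 + c₂.im^2 with hs₂
  have hpos : ∀ (c : ℂ), c.im ≠ 0 → ∀ R : ℝ, 0 < (R - c.re)^2 + c.im^2 := fun c hc R => by
    have : 0 < c.im^2 := by positivity
    nlinarith [sq_nonneg (R - c.re)]
  have habs : ∀ (c : ℂ) (R : ℝ), Real.log (‖c - R‖) =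
      Real.log ((R - c.re)^2 + c.im^2) / 2 := by
    intro c R
    have hn : Complex.normSq (c - R) = (R - c.re)^2 + c.im^2 := by
      simp [Complex.normSq_apply]; ring
    rw [Complex.norm_def, hn, Real.log_sqrt (by positivity)]
  have hs2top : Tendsto s₂ atTop atTop := by
    have h0 : Tendsto (fun R : ℝ => R - c₂.re) atTop atTop :=
      tendsto_atTop_add_const_right atTop (-c₂.re) tendsto_id
    have h1 := (tendsto_pow_atTop (two_ne_zero)).comp h0
    exact tendsto_atTop_add_const_right atTop (c₂.im^2) h1
  have hratio : Tendsto (fun R => s₁ R / s₂ R) atTop (𝓝 1) := by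
    have hd : Tendsto (fun R => (c₁.im^2 - c₂.im^2) * (s₂ R)⁻¹) atTop (𝓝 0) := by
      have := (hs2top.inv_tendsto_atTop).const_mul (c₁.im^2 - c₂.im^2)
      simpa using this
    have : Tendsto (fun R => 1 + (c₁.im^2 - c₂.im^2) * (s₂ R)⁻¹) atTop (𝓝 1) := by
      have h' := (tendsto_const_nhds (x := (1:ℝ)) (f := atTop)).add hd
      rw [add_zero] at h'
      exact h'
    apply this.congr
    intro R
    have h2 := (hpos c₂ h₂ R).ne'
    simp only [hs₁, hs₂, hre]
    field_simp
    try ring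
  have hlog : Tendsto (fun R => Real.log (s₁ R / s₂ R)) atTop (𝓝 0) := by
    have := (Real.continuousAt_log one_ne_zero).tendsto.comp hratio
    simpa [Function.comp_def] using this
  have := hlog.div_const 2
  rw [zero_div] at this
  apply this.congr
  intro R
  rw [habs, habs, Real.log_div (hpos c₁ h₁ R).ne' (hpos c₂ h₂ R).ne']
  ring

lemma aux_log_split (x y : ℂ) : Complex.log x - Complex.log y =
    ((Real.log (‖x‖) - Real.log (‖y‖) : ℝ) : ℂ)
      + ((Complex.arg x - Complex.arg y : ℝ) : ℂ) * Complex.I := by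
  rw [Complex.log, Complex.log]
  push_cast
  ring

lemma aux_log_sub_top (c₁ c₂ : ℂ) (h₁ : c₁.im < 0) (h₂ : 0 < c₂.im) (hre : c₁.re = c₂.re) :
    Tendsto (fun R : ℝ => Complex.log (c₁ - R) - Complex.log (c₂ - R)) atTop
      (𝓝 (-(2*(π:ℂ))*Complex.I)) := by
  have hm := aux_logabs c₁ c₂ h₁.ne h₂.ne' hre
  have ha := (aux_arg_neg_pi c₁ h₁).sub (aux_arg_pi c₂ h₂)
  have hmc : Tendsto (fun R : ℝ => ((Real.log (‖c₁ - R‖)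
      - Real.log (‖c₂ - R‖) : ℝ) : ℂ)) atTop (𝓝 0) := by
    have := (Complex.continuous_ofReal.tendsto 0).comp hm
    simpa only [Complex.ofReal_zero, Function.comp_def] using this
  have hac : Tendsto (fun R : ℝ => ((Complex.arg (c₁ - R) - Complex.arg (c₂ - R) : ℝ) : ℂ)
      * Complex.I) atTop (𝓝 (((-π - π : ℝ) : ℂ) * Complex.I)) := by
    exact (((Complex.continuous_ofReal.tendsto _).comp ha)).mul_const _
  have := hmc.add hac
  rw [zero_add] at this
  have heq : (((-π - π : ℝ) : ℂ) * Complex.I) = -(2*(π:ℂ))*Complex.I := by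
    push_cast; ring
  rw [heq] at this
  exact this.congr fun R => (aux_log_split _ _).symm

lemma aux_log_sub_bot (c₁ c₂ : ℂ) (h₁ : c₁.im ≠ 0) (h₂ : c₂.im ≠ 0) (hre : c₁.re = c₂.re) :
    Tendsto (fun R : ℝ => Complex.log (c₁ + R) - Complex.log (c₂ + R)) atTop (𝓝 0) := by
  have hm := aux_logabs (-c₁) (-c₂) (by simpa using h₁) (by simpa using h₂) (by simpa using hre)
  have hm' : Tendsto (fun R : ℝ => Real.log (‖c₁ + R‖)
      - Real.log (‖c₂ + R‖)) atTop (𝓝 0) := by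
    apply hm.congr
    intro R
    have e1 : ‖-c₁ - R‖ = ‖c₁ + R‖ := by
      rw [← norm_neg]; ring_nf
    have e2 : ‖-c₂ - R‖ = ‖c₂ + R‖ := by
      rw [← norm_neg]; ring_nf
    rw [e1, e2]
  have ha := (aux_arg_zero c₁).sub (aux_arg_zero c₂)
  rw [sub_zero] at ha
  have hmc : Tendsto (fun R : ℝ => ((Real.log (‖c₁ + R‖)
      - Real.log (‖c₂ + R‖) : ℝ) : ℂ)) atTop (𝓝 0) := by
    have := (Complex.continuous_ofReal.tendsto 0).comp hm'
    simpa only [Complex.ofReal_zero, Function.comp_def] using this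
  have hac : Tendsto (fun R : ℝ => ((Complex.arg (c₁ + R) - Complex.arg (c₂ + R) : ℝ) : ℂ)
      * Complex.I) atTop (𝓝 (((0:ℝ):ℂ) * Complex.I)) := by
    exact (((Complex.continuous_ofReal.tendsto _).comp ha)).mul_const _
  have := hmc.add hac
  simp only [Complex.ofReal_zero, zero_mul, add_zero] at this
  exact this.congr fun R => (aux_log_split _ _).symm

lemma aux_integrable (ζ : ℂ) (σ : ℝ) (h : ζ.im ≠ σ) :
    Integrable (fun x : ℝ =>
      Complex.exp (-((x:ℂ) + Complex.I*σ)^2/2) / (ζ - ((x:ℂ) + Complex.I*σ))) := by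
  have hden : ∀ x : ℝ, ζ - ((x:ℂ) + Complex.I*σ) ≠ 0 := by
    intro x h0
    apply h
    have := congrArg Complex.im h0
    simp at this
    linarith
  have hcont : Continuous (fun x : ℝ =>
      Complex.exp (-((x:ℂ) + Complex.I*σ)^2/2) / (ζ - ((x:ℂ) + Complex.I*σ))) := by
    apply Continuous.div
    · exact Complex.continuous_exp.comp (by continuity)
    · continuity
    · exact hden
  set δ := |ζ.im - σ| with hδ
  have hδpos : 0 < δ := abs_pos.mpr (sub_ne_zero.mpr h)
  have hbound : ∀ x : ℝ, ‖Complex.exp (-((x:ℂ) + Complex.I*σ)^2/2) / (ζ - ((x:ℂ) + Complex.I*σ))‖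
      ≤ (Real.exp (σ^2/2) / δ) * Real.exp (-(1/2) * x^2) := by
    intro x
    have hnum : ‖Complex.exp (-((x:ℂ) + Complex.I*σ)^2/2)‖
        = Real.exp (σ^2/2) * Real.exp (-(1/2) * x^2) := by
      have harg : -((x:ℂ) + Complex.I*σ)^2/2
          = (((σ^2 - x^2)/2 : ℝ) : ℂ) + ((-(x*σ) : ℝ) : ℂ) * Complex.I := by
        have hI : (Complex.I)^2 = -1 := Complex.I_sq
        push_cast
        ring_nf
        rw [hI]
        ring
      rw [harg, Complex.norm_exp, ← Real.exp_add]
      congr 1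
      simp [← Complex.ofReal_pow]
      ring
    have hd : δ ≤ ‖ζ - ((x:ℂ) + Complex.I*σ)‖ := by
      have := Complex.abs_im_le_norm (ζ - ((x:ℂ) + Complex.I*σ))
      have him : (ζ - ((x:ℂ) + Complex.I*σ)).im = ζ.im - σ := by simp
      rw [him] at this
      exact this
    rw [norm_div]
    calc ‖Complex.exp (-((x:ℂ) + Complex.I*σ)^2/2)‖ / ‖ζ - ((x:ℂ) + Complex.I*σ)‖
        ≤ (Real.exp (σ^2/2) * Real.exp (-(1/2) * x^2)) / δ := by
          apply div_le_div₀ (by positivity) (le_of_eq hnum) hδpos hd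
      _ = (Real.exp (σ^2/2) / δ) * Real.exp (-(1/2) * x^2) := by ring
  have hg : Integrable (fun x : ℝ => (Real.exp (σ^2/2) / δ) * Real.exp (-(1/2) * x^2)) := by
    have : Integrable (fun x : ℝ => Real.exp (-(1/2) * x^2)) := integrable_exp_neg_mul_sq (by norm_num)
    exact this.const_mul _
  exact hg.mono' hcont.aestronglyMeasurable (Filter.Eventually.of_forall hbound)

/-- For ζ ∈ ℂ and ε > 0 with |Im ζ| < ε, the Cauchy transforms of
e^{−ω²/2} along the lines ℝ ∓ iε are integrable and their difference satisfies the
residue identity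
(1/(2πi))∫ [e^{−(x−iε)²/2}/(ζ−(x−iε)) − e^{−(x+iε)²/2}/(ζ−(x+iε))] dx = −e^{−ζ²/2}. -/
theorem stmt19 (ζ : ℂ) (ε : ℝ) (hε : 0 < ε) (him : |ζ.im| < ε) :
    Integrable (fun x : ℝ =>
      Complex.exp (-((x:ℂ) - Complex.I*ε)^2/2) / (ζ - ((x:ℂ) - Complex.I*ε))) ∧
    Integrable (fun x : ℝ =>
      Complex.exp (-((x:ℂ) + Complex.I*ε)^2/2) / (ζ - ((x:ℂ) + Complex.I*ε))) ∧
    (1/(2*(Real.pi:ℂ)*Complex.I))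
      * (∫ x : ℝ,
          (Complex.exp (-((x:ℂ) - Complex.I*ε)^2/2) / (ζ - ((x:ℂ) - Complex.I*ε))
            - Complex.exp (-((x:ℂ) + Complex.I*ε)^2/2) / (ζ - ((x:ℂ) + Complex.I*ε))))
      = -Complex.exp (-ζ^2/2) := by
  obtain ⟨himl, himr⟩ := abs_lt.mp him
  have hi1 : Integrable (fun x : ℝ =>
      Complex.exp (-((x:ℂ) - Complex.I*ε)^2/2) / (ζ - ((x:ℂ) - Complex.I*ε))) := by
    have := aux_integrable ζ (-ε) (ne_of_gt himl)
    simpa [Complex.ofReal_neg, mul_neg, ← sub_eq_add_neg] using this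
  have hi2 : Integrable (fun x : ℝ =>
      Complex.exp (-((x:ℂ) + Complex.I*ε)^2/2) / (ζ - ((x:ℂ) + Complex.I*ε))) :=
    aux_integrable ζ ε (ne_of_lt himr)
  refine ⟨hi1, hi2, ?_⟩
  set e : ℂ := Complex.exp (-ζ^2/2) with he
  set F : ℝ → ℂ := fun x =>
      Complex.exp (-((x:ℂ) - Complex.I*ε)^2/2) / (ζ - ((x:ℂ) - Complex.I*ε))
        - Complex.exp (-((x:ℂ) + Complex.I*ε)^2/2) / (ζ - ((x:ℂ) + Complex.I*ε)) with hF
  suffices hval : ∫ x : ℝ, F x = -(2*(π:ℂ))*Complex.I * e by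
    rw [hval]
    have hπ : (π:ℂ) ≠ 0 := Complex.ofReal_ne_zero.mpr Real.pi_ne_zero
    field_simp
  -- basic non-vanishing facts
  have hζb : ∀ x : ℝ, ((x:ℂ) - Complex.I*ε) ≠ ζ := by
    intro x h0
    have := congrArg Complex.im h0
    simp at this
    rw [← this] at himl
    linarith
  have hζt : ∀ x : ℝ, ((x:ℂ) + Complex.I*ε) ≠ ζ := by
    intro x h0
    have := congrArg Complex.im h0
    simp at this
    rw [← this] at himr
    linarith
  have hdb : ∀ x : ℝ, ζ - ((x:ℂ) - Complex.I*ε) ≠ 0 :=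
    fun x => sub_ne_zero.mpr (Ne.symm (hζb x))
  have hdt : ∀ x : ℝ, ζ - ((x:ℂ) + Complex.I*ε) ≠ 0 :=
    fun x => sub_ne_zero.mpr (Ne.symm (hζt x))
  -- the regularized function G
  set f : ℂ → ℂ := fun z => Complex.exp (-z^2/2) with hfdef
  have hfd : Differentiable ℂ f := by
    apply Complex.differentiable_exp.comp
    exact ((differentiable_pow 2).neg.div_const 2)
  set G : ℂ → ℂ := dslope f ζ with hGdef
  have hGdiff : Differentiable ℂ G := by
    rw [← differentiableOn_univ]
    rw [hGdef, differentiableOn_dslope (Filter.univ_mem)]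
    exact hfd.differentiableOn
  have hGcont : Continuous G := hGdiff.continuous
  have hGval : ∀ w : ℂ, w ≠ ζ → G w = (f w - e)/(w - ζ) := by
    intro w hw
    rw [hGdef, dslope_of_ne f hw, slope_def_field]
  -- pointwise splitting
  have hsplit : ∀ x : ℝ, F x =
      e * ((ζ - ((x:ℂ) - Complex.I*ε))⁻¹ - (ζ - ((x:ℂ) + Complex.I*ε))⁻¹)
        + (G ((x:ℂ) + Complex.I*ε) - G ((x:ℂ) - Complex.I*ε)) := by
    intro x
    rw [hF]
    simp only
    rw [hGval _ (hζt x), hGval _ (hζb x)]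
    have h1 := hdb x
    have h2 := hdt x
    have h3 : ((x:ℂ) - Complex.I*ε) - ζ ≠ 0 := sub_ne_zero.mpr (hζb x)
    have h4 : ((x:ℂ) + Complex.I*ε) - ζ ≠ 0 := sub_ne_zero.mpr (hζt x)
    simp only [hfdef]
    rw [show ((x:ℂ) + Complex.I*ε) - ζ = -(ζ - ((x:ℂ) + Complex.I*ε)) by ring,
      show ((x:ℂ) - Complex.I*ε) - ζ = -(ζ - ((x:ℂ) - Complex.I*ε)) by ring, div_neg, div_neg]
    ring
  -- antiderivative of the pole part
  set H : ℝ → ℂ := fun x =>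
    e * (Complex.log (ζ - x - Complex.I*ε) - Complex.log (ζ - x + Complex.I*ε)) with hHdef
  have hmem1 : ∀ x : ℝ, (ζ - x - Complex.I*ε) ∈ Complex.slitPlane := by
    intro x
    rw [Complex.mem_slitPlane_iff]
    right
    have : (ζ - x - Complex.I*ε).im = ζ.im - ε := by simp
    rw [this]
    intro hcon
    linarith
  have hmem2 : ∀ x : ℝ, (ζ - x + Complex.I*ε) ∈ Complex.slitPlane := by
    intro x
    rw [Complex.mem_slitPlane_iff]
    right
    have : (ζ - x + Complex.I*ε).im = ζ.im + ε := by simp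
    rw [this]
    intro hcon
    linarith
  have hne1 : ∀ x : ℝ, (ζ - x - Complex.I*ε) ≠ 0 := by
    intro x h0
    have := hdt x
    apply this
    rw [← h0]
    ring
  have hne2 : ∀ x : ℝ, (ζ - x + Complex.I*ε) ≠ 0 := by
    intro x h0
    have := hdb x
    apply this
    rw [← h0]
    ring
  have hHderiv : ∀ x : ℝ, HasDerivAt H
      (e * ((ζ - ((x:ℂ) - Complex.I*ε))⁻¹ - (ζ - ((x:ℂ) + Complex.I*ε))⁻¹)) x := by
    intro x
    have hin1 : HasDerivAt (fun y : ℝ => ζ - y - Complex.I*ε) (-1) x := by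
      have h0 : HasDerivAt (fun y : ℝ => (y:ℂ)) 1 x := Complex.ofRealCLM.hasDerivAt
      simpa using (h0.const_sub ζ).sub_const (Complex.I*ε)
    have hin2 : HasDerivAt (fun y : ℝ => ζ - y + Complex.I*ε) (-1) x := by
      have h0 : HasDerivAt (fun y : ℝ => (y:ℂ)) 1 x := Complex.ofRealCLM.hasDerivAt
      simpa using (h0.const_sub ζ).add_const (Complex.I*ε)
    have hl1 : HasDerivAt (fun y : ℝ => Complex.log (ζ - y - Complex.I*ε))
        ((ζ - x - Complex.I*ε)⁻¹ * (-1)) x :=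
      by have := (Complex.hasDerivAt_log (hmem1 x)).comp x hin1; exact this
    have hl2 : HasDerivAt (fun y : ℝ => Complex.log (ζ - y + Complex.I*ε))
        ((ζ - x + Complex.I*ε)⁻¹ * (-1)) x :=
      by have := (Complex.hasDerivAt_log (hmem2 x)).comp x hin2; exact this
    have := ((hl1.sub hl2).const_mul e)
    refine this.congr_deriv ?_
    have e1 : ζ - ((x:ℂ) - Complex.I*ε) = ζ - x + Complex.I*ε := by ring
    have e2 : ζ - ((x:ℂ) + Complex.I*ε) = ζ - x - Complex.I*ε := by ring
    rw [e1, e2]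
    ring
  -- pole part: interval integral via FTC
  set p : ℝ → ℂ := fun x =>
    e * ((ζ - ((x:ℂ) - Complex.I*ε))⁻¹ - (ζ - ((x:ℂ) + Complex.I*ε))⁻¹) with hpdef
  have hpcont : Continuous p := by
    apply Continuous.mul continuous_const
    apply Continuous.sub
    · exact ((continuous_const.sub ((Complex.continuous_ofReal).sub continuous_const)).inv₀ hdb)
    · exact ((continuous_const.sub ((Complex.continuous_ofReal).add continuous_const)).inv₀ hdt)
  have hPR : ∀ R : ℝ, (∫ x in (-R)..R, p x) = H R - H (-R) := by
    intro R
    exact intervalIntegral.integral_eq_sub_of_hasDerivAt (fun x _ => hHderiv x)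
      (hpcont.intervalIntegrable _ _)
  -- limits of H
  have hHtop : Tendsto (fun R : ℝ => H R) atTop (𝓝 (e * (-(2*(π:ℂ))*Complex.I))) := by
    have hc1 : (ζ - Complex.I*ε).im < 0 := by
      have : (ζ - Complex.I*ε).im = ζ.im - ε := by simp
      rw [this]; linarith
    have hc2 : 0 < (ζ + Complex.I*ε).im := by
      have : (ζ + Complex.I*ε).im = ζ.im + ε := by simp
      rw [this]; linarith
    have hre : (ζ - Complex.I*ε).re = (ζ + Complex.I*ε).re := by simp
    have h0 := (aux_log_sub_top (ζ - Complex.I*ε) (ζ + Complex.I*ε) hc1 hc2 hre).const_mul e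
    apply h0.congr
    intro R
    rw [hHdef]
    simp only
    congr 2
    · ring
    · ring
  have hHbot : Tendsto (fun R : ℝ => H (-R)) atTop (𝓝 0) := by
    have him1 : (ζ - Complex.I*ε).im ≠ 0 := by
      have : (ζ - Complex.I*ε).im = ζ.im - ε := by simp
      rw [this]; intro h0; linarith
    have him2 : (ζ + Complex.I*ε).im ≠ 0 := by
      have : (ζ + Complex.I*ε).im = ζ.im + ε := by simp
      rw [this]; intro h0; linarith
    have hre : (ζ - Complex.I*ε).re = (ζ + Complex.I*ε).re := by simp
    have h0 := (aux_log_sub_bot (ζ - Complex.I*ε) (ζ + Complex.I*ε) him1 him2 hre).const_mul e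
    rw [mul_zero] at h0
    apply h0.congr
    intro R
    rw [hHdef]
    simp only
    push_cast
    congr 2
    · ring
    · ring
  have hPlim : Tendsto (fun R : ℝ => H R - H (-R)) atTop (𝓝 (-(2*(π:ℂ))*Complex.I * e)) := by
    have := hHtop.sub hHbot
    rw [sub_zero] at this
    convert this using 2
    ring
  -- vertical segment integrals
  set Vert : ℝ → ℂ := fun s => ∫ y in (-ε)..ε, G ((s:ℂ) + (y:ℂ)*Complex.I) with hVert
  -- rectangle contour theorem
  have hrect : ∀ R : ℝ,
      (∫ x in (-R)..R, G ((x:ℂ) - Complex.I*ε)) - (∫ x in (-R)..R, G ((x:ℂ) + Complex.I*ε))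
        + Complex.I * Vert R - Complex.I * Vert (-R) = 0 := by
    intro R
    have h0 := Complex.integral_boundary_rect_eq_zero_of_differentiableOn G
      (Complex.ofReal (-R) + Complex.ofReal (-ε) * Complex.I)
      (Complex.ofReal R + Complex.ofReal ε * Complex.I)
      (hGdiff.differentiableOn)
    have hzre : (Complex.ofReal (-R) + Complex.ofReal (-ε) * Complex.I).re = -R := by simp
    have hzim : (Complex.ofReal (-R) + Complex.ofReal (-ε) * Complex.I).im = -ε := by simp
    have hwre : (Complex.ofReal R + Complex.ofReal ε * Complex.I).re = R := by simp
    have hwim : (Complex.ofReal R + Complex.ofReal ε * Complex.I).im = ε := by simp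
    rw [hzre, hzim, hwre, hwim] at h0
    have e1 : ∀ x : ℝ, (x:ℂ) + ((-ε : ℝ):ℂ)*Complex.I = (x:ℂ) - Complex.I*ε := by
      intro x; push_cast; ring
    have e2 : ∀ x : ℝ, (x:ℂ) + ((ε : ℝ):ℂ)*Complex.I = (x:ℂ) + Complex.I*ε := by
      intro x; push_cast; ring
    simp only [e1, e2, smul_eq_mul] at h0
    exact h0
  -- bound on the vertical integrals
  set M : ℝ := Real.exp (ε^2/2) + ‖e‖ with hM
  set a : ℝ := |ζ.re| with ha
  have hVbound : ∀ R : ℝ, a + 1 ≤ R → ∀ s : ℝ, |s| = R →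
      ‖Vert s‖ ≤ M / (R - a) * (2*ε) := by
    intro R hR s hs
    have hden : (0:ℝ) < R - a := by linarith
    have key : ∀ y ∈ Set.uIoc (-ε) ε, ‖G ((s:ℂ) + (y:ℂ)*Complex.I)‖ ≤ M / (R - a) := by
      intro y hy
      have hy' : y ∈ Set.Ioc (-ε) ε := by
        rwa [Set.uIoc_of_le (by linarith : -ε ≤ ε)] at hy
      set w : ℂ := (s:ℂ) + (y:ℂ)*Complex.I with hw
      have hwre : w.re = s := by simp [hw]
      have hwim : w.im = y := by simp [hw]
      have hdist : R - a ≤ ‖w - ζ‖ := by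
        have h1 : |w.re - ζ.re| ≤ ‖w - ζ‖ := by
          have := Complex.abs_re_le_norm (w - ζ)
          simpa using this
        have h2 : |s| - |ζ.re| ≤ |s - ζ.re| := abs_sub_abs_le_abs_sub s ζ.re
        rw [hwre] at h1
        rw [hs] at h2
        calc R - a ≤ |s - ζ.re| := h2
        _ ≤ ‖w - ζ‖ := h1
      have hwζ : w ≠ ζ := by
        intro h0
        rw [h0] at hdist
        simp at hdist
        linarith
      rw [hGval w hwζ]
      rw [norm_div]
      have hnum : ‖f w - e‖ ≤ M := by
        have hfw : ‖f w‖ ≤ Real.exp (ε^2/2) := by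
          have harg : -w^2/2 = (((y^2 - s^2)/2 : ℝ) : ℂ) + ((-(s*y) : ℝ):ℂ) * Complex.I := by
            rw [hw]
            have hI : (Complex.I)^2 = -1 := Complex.I_sq
            push_cast
            ring_nf
            rw [hI]
            ring
          rw [hfdef]
          simp only
          rw [harg, Complex.norm_exp]
          have hre : ((((y^2 - s^2)/2 : ℝ) : ℂ) + ((-(s*y) : ℝ):ℂ) * Complex.I).re
              = (y^2 - s^2)/2 := by simp [← Complex.ofReal_pow]
          rw [hre]
          apply Real.exp_le_exp.mpr
          have hy2 : y^2 ≤ ε^2 := sq_le_sq' (by linarith [hy'.1]) hy'.2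
          nlinarith [sq_nonneg s]
        calc ‖f w - e‖ ≤ ‖f w‖ + ‖e‖ := norm_sub_le _ _
        _ ≤ Real.exp (ε^2/2) + ‖e‖ := by
            apply add_le_add _ le_rfl
            exact hfw
        _ = M := hM.symm
      calc ‖f w - e‖ / ‖w - ζ‖ ≤ M / (R - a) := by
            apply div_le_div₀ (by positivity) hnum hden
            simpa using hdist
      _ = M / (R - a) := rfl
    have := intervalIntegral.norm_integral_le_of_norm_le_const key
    rw [hVert]
    simp only
    calc ‖∫ y in (-ε)..ε, G ((s:ℂ) + (y:ℂ)*Complex.I)‖ ≤ M / (R - a) * |ε - (-ε)| := this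
    _ = M / (R - a) * (2*ε) := by rw [abs_of_pos (by linarith : (0:ℝ) < ε - (-ε))]; ring
  -- Q tends to zero
  have hQlim : Tendsto (fun R : ℝ => Complex.I * Vert R - Complex.I * Vert (-R)) atTop (𝓝 0) := by
    apply squeeze_zero_norm' (a := fun R : ℝ => 2 * (M / (R - a) * (2*ε)))
    · filter_upwards [eventually_ge_atTop (a + 1)] with R hR
      have hRpos : (0:ℝ) < R := by
        have h00 : (0:ℝ) ≤ a := abs_nonneg _
        linarith
      have hb1 := hVbound R hR R (abs_of_pos hRpos)
      have hb2 := hVbound R hR (-R) (by rw [abs_neg]; exact abs_of_pos hRpos)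
      calc ‖Complex.I * Vert R - Complex.I * Vert (-R)‖
          ≤ ‖Complex.I * Vert R‖ + ‖Complex.I * Vert (-R)‖ := norm_sub_le _ _
        _ = ‖Vert R‖ + ‖Vert (-R)‖ := by simp
        _ ≤ M / (R - a) * (2*ε) + M / (R - a) * (2*ε) := add_le_add hb1 hb2
        _ = 2 * (M / (R - a) * (2*ε)) := by ring
    · have h0 : Tendsto (fun R : ℝ => (R - a)⁻¹) atTop (𝓝 0) :=
        (tendsto_atTop_add_const_right atTop (-a) tendsto_id).inv_tendsto_atTop
      have h1 := (h0.const_mul M).mul_const (2*ε)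
      have h2 := h1.const_mul 2
      simp only [mul_zero, zero_mul] at h2
      apply h2.congr
      intro R
      rw [div_eq_mul_inv]
      try ring
  -- assemble
  have hGb : Continuous fun x : ℝ => G ((x:ℂ) - Complex.I*ε) :=
    hGcont.comp (Complex.continuous_ofReal.sub continuous_const)
  have hGt : Continuous fun x : ℝ => G ((x:ℂ) + Complex.I*ε) :=
    hGcont.comp (Complex.continuous_ofReal.add continuous_const)
  have hsum : ∀ R : ℝ, (∫ x in (-R)..R, F x)
      = (H R - H (-R)) + (Complex.I * Vert R - Complex.I * Vert (-R)) := by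
    intro R
    have hc : (∫ x in (-R)..R, F x) = ∫ x in (-R)..R,
        (p x + (G ((x:ℂ) + Complex.I*ε) - G ((x:ℂ) - Complex.I*ε))) :=
      intervalIntegral.integral_congr (fun x _ => hsplit x)
    rw [hc, intervalIntegral.integral_add (g := fun x : ℝ => G ((x:ℂ) + Complex.I*ε) - G ((x:ℂ) - Complex.I*ε)) (hpcont.intervalIntegrable _ _)
      ((hGt.sub hGb).intervalIntegrable _ _),
      intervalIntegral.integral_sub (hGt.intervalIntegrable _ _) (hGb.intervalIntegrable _ _),
      hPR R]
    linear_combination (-(1:ℂ)) * hrect R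
  have hlim1 : Tendsto (fun R : ℝ => ∫ x in (-R)..R, F x) atTop (𝓝 (∫ x : ℝ, F x)) :=
    MeasureTheory.intervalIntegral_tendsto_integral (hi1.sub hi2)
      tendsto_neg_atTop_atBot tendsto_id
  have hlim2 : Tendsto (fun R : ℝ => ∫ x in (-R)..R, F x) atTop
      (𝓝 (-(2*(π:ℂ))*Complex.I * e + 0)) :=
    (hPlim.add hQlim).congr (fun R => (hsum R).symm)
  have hfin := tendsto_nhds_unique hlim1 hlim2
  rw [add_zero] at hfin
  exact hfin
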